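/- Let M ≥ 2, r_1,…,r_{M−1} ≥ 1 and N_1,…,N_M ≥ 1 be integers. Let (θ^{(1)}_{i,k}), (θ^{(p)}_{a,i,b}) for 2 ≤ p ≤ M−1, and (θ^{(M)}_{a,i}) be a mutually independent family of square-integrable real random variables, where i ranges over the mode-p physical index set {1,…,N_p} and a, b over the adjacent rank index sets, with mean μ_p and variance σ_p² for every entry of the p-th core. For a multi-index i = (i_1,…,i_M) define η_i = Σ_{k_1,…,k_{M−1}} θ^{(1)}_{i_1,k_1} θ^{(2)}_{k_1,i_2,k_2} ⋯ θ^{(M)}_{k_{M−1},i_M}. Then for any two multi-indices i, j with i_p = j_p for exactly one mode p (i.e., i_k ≠ j_k for all k ≠ p), Cov(η_i, η_j) = ( ∏_{ℓ=1}^{M−1} r_ℓ^{α_ℓ} ) · σ_p² · ∏_{k≠p} μ_k², where α_ℓ = 1 if ℓ = p−1 or ℓ = p, and α_ℓ = 2 otherwise. -/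

import Mathlib

open MeasureTheory ProbabilityTheory Finset

section AuxLemmas
variable {Ω : Type*} [MeasurableSpace Ω] {P : Measure Ω}

lemma iIndepFun_ae_congr {ι : Type*} {β : ι → Type*} {m : ∀ i, MeasurableSpace (β i)}
    {f f' : ∀ i, Ω → β i} (hf : iIndepFun (m := m) f P) (h : ∀ i, f i =ᵐ[P] f' i) :
    iIndepFun (m := m) f' P := by
  classical
  rw [iIndepFun_iff_measure_inter_preimage_eq_mul] at hf ⊢
  intro S sets hsets
  have hiter : ∀ T : Finset ι,
      ((⋂ x ∈ T, f x ⁻¹' sets x : Set Ω) : Set Ω) =ᵐ[P] (⋂ x ∈ T, f' x ⁻¹' sets x : Set Ω) := by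
    intro T
    induction T using Finset.induction_on with
    | empty => simp
    | insert _ _ ha ih =>
        simp only [Finset.set_biInter_insert]
        exact (Filter.EventuallyEq.fun_comp (h _) _).inter ih
  calc P (⋂ x ∈ S, f' x ⁻¹' sets x) = P (⋂ x ∈ S, f x ⁻¹' sets x) :=
        (measure_congr (hiter S)).symm
    _ = ∏ x ∈ S, P (f x ⁻¹' sets x) := hf S hsets
    _ = ∏ x ∈ S, P (f' x ⁻¹' sets x) :=
        Finset.prod_congr rfl fun x _ => measure_congr (Filter.EventuallyEq.fun_comp (h x) _)

lemma indep_prod_integral {ι : Type*} [IsProbabilityMeasure P] {g : ι → Ω → ℝ}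
    (hmeas : ∀ x, Measurable (g x)) (hint : ∀ x, Integrable (g x) P)
    (hind : iIndepFun g P) (s : Finset ι) :
    Integrable (fun ω => ∏ x ∈ s, g x ω) P ∧
      (∫ ω, ∏ x ∈ s, g x ω ∂P) = ∏ x ∈ s, ∫ ω, g x ω ∂P := by
  classical
  induction s using Finset.induction_on with
  | empty => simp
  | @insert a s ha ih =>
      have hIF : IndepFun (g a) (fun ω => ∏ x ∈ s, g x ω) P := by
        have := hind.indepFun_finsetProd_of_notMem hmeas ha
        have heq : (fun ω => ∏ x ∈ s, g x ω) = ∏ x ∈ s, g x := by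
          funext ω; simp
        rw [heq]
        exact this.symm
      have hint' : Integrable (fun ω => g a ω * ∏ x ∈ s, g x ω) P :=
        hIF.integrable_mul (hint a) ih.1
      constructor
      · simpa [Finset.prod_insert ha] using hint'
      · rw [show (fun ω => ∏ x ∈ insert a s, g x ω) = fun ω => g a ω * ∏ x ∈ s, g x ω by
          funext ω; rw [Finset.prod_insert ha]]
        have h2 : ∫ ω, g a ω * ∏ x ∈ s, g x ω ∂P
            = (∫ ω, g a ω ∂P) * ∫ ω, ∏ x ∈ s, g x ω ∂P :=
          hIF.integral_mul_eq_mul_integral (hint a).1 ih.1.1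
        rw [h2, ih.2, Finset.prod_insert ha]

end AuxLemmas

abbrev TTIdx (M : ℕ) (r N : ℕ → ℕ) := (p : Fin M) × Fin (r p) × Fin (N p) × Fin (r (p + 1))

lemma TTIdx_mk_inj {M : ℕ} {r N : ℕ → ℕ} {q : Fin M} {a a' : Fin (r q)} {b b' : Fin (N q)}
    {c c' : Fin (r (q + 1))}
    (h : (⟨q, a, b, c⟩ : TTIdx M r N) = ⟨q, a', b', c'⟩) : a = a' ∧ b = b' ∧ c = c' := by
  simpa using h

/-- Covariance of two real random variables: `Cov(X,Y) = E[XY] - E[X]E[Y]`. -/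
noncomputable def covRV {Ω : Type*} [MeasurableSpace Ω] (P : Measure Ω) (X Y : Ω → ℝ) : ℝ :=
  (∫ ω, X ω * Y ω ∂P) - (∫ ω, X ω ∂P) * (∫ ω, Y ω ∂P)

/-- Exact-sharing singleton covariance of the Tensor Train model with TT-ranks
`(r 1, …, r (M−1))` (boundary ranks `r 0 = r M = 1`): all core entries
`θ p a i b` (left rank `a`, physical index `i`, right rank `b`) are jointly
independent and square integrable with moments `(μm p, σ2 p)`.  For rate
entries `η i = ∑ k, ∏ q, θ q (k q) (i q) (k (q+1))` and two multi-indices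
`i, j` sharing exactly the single mode `p`, the covariance equals
`(∏_{ℓ=1}^{M−1} r ℓ ^ α ℓ) * σ p² * ∏_{k≠p} μ k²`, where `α ℓ = 1` if the
link `ℓ` is adjacent to the shared mode and `α ℓ = 2` otherwise. -/
theorem tt_singleton_covariance
    {Ω : Type*} [MeasurableSpace Ω] (P : Measure Ω) [IsProbabilityMeasure P]
    (M : ℕ) (hM : 2 ≤ M)
    (r : ℕ → ℕ) (hr0 : r 0 = 1) (hrM : r M = 1)
    (hr : ∀ ℓ, 1 ≤ ℓ → ℓ ≤ M - 1 → 1 ≤ r ℓ)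
    (N : ℕ → ℕ) (hN : ∀ p, p < M → 1 ≤ N p)
    (θ : (p : ℕ) → Fin (r p) → Fin (N p) → Fin (r (p + 1)) → Ω → ℝ)
    (hL2 : ∀ p a i b, MemLp (θ p a i b) 2 P)
    (hIndep : iIndepFun
      (fun x : ((p : Fin M) × Fin (r p) × Fin (N p) × Fin (r (p + 1))) =>
        θ x.1 x.2.1 x.2.2.1 x.2.2.2) P)
    (μm σ2 : ℕ → ℝ)
    (hmean : ∀ p, p < M → ∀ a i b, ∫ ω, θ p a i b ω ∂P = μm p)
    (hvar : ∀ p, p < M → ∀ a i b, variance (θ p a i b) P = σ2 p)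
    (i j : (q : Fin M) → Fin (N q))
    (p : Fin M) (hshare : i p = j p) (hdiff : ∀ k, k ≠ p → i k ≠ j k) :
    covRV P
        (fun ω => ∑ k : (ℓ : Fin (M + 1)) → Fin (r ℓ),
          ∏ q : Fin M, θ q (k q.castSucc) (i q) (k q.succ) ω)
        (fun ω => ∑ k : (ℓ : Fin (M + 1)) → Fin (r ℓ),
          ∏ q : Fin M, θ q (k q.castSucc) (j q) (k q.succ) ω)
      = (∏ ℓ ∈ Finset.Ico 1 M,
            (r ℓ : ℝ) ^ (if ℓ = (p : ℕ) ∨ ℓ = (p : ℕ) + 1 then 1 else 2)) *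
          σ2 p * ∏ k ∈ Finset.univ.erase p, μm (k : ℕ) ^ 2 := by
  classical
  -- measurable modification of the core entries
  set fam : TTIdx M r N → Ω → ℝ := fun x => θ x.1 x.2.1 x.2.2.1 x.2.2.2 with hfam
  have hfamL2 : ∀ x, MemLp (fam x) 2 P := fun x => hL2 _ _ _ _
  set g : TTIdx M r N → Ω → ℝ := fun x => (hfamL2 x).1.mk (fam x) with hgdef
  have hae : ∀ x, fam x =ᵐ[P] g x := fun x => (hfamL2 x).1.ae_eq_mk
  have hgmeas : ∀ x, Measurable (g x) := fun x => (hfamL2 x).1.stronglyMeasurable_mk.measurable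
  have hgL2 : ∀ x, MemLp (g x) 2 P := fun x => (hfamL2 x).ae_eq (hae x)
  have hgint : ∀ x, Integrable (g x) P := fun x => (hgL2 x).integrable one_le_two
  have hgsqint : ∀ x, Integrable (fun ω => g x ω ^ 2) P := fun x => by
    have := (hgL2 x).integrable_sq
    simpa [sq] using this
  have hgind : iIndepFun g P := iIndepFun_ae_congr hIndep hae
  have hgmean : ∀ x : TTIdx M r N, ∫ ω, g x ω ∂P = μm x.1 := fun x => by
    rw [← integral_congr_ae (hae x)]
    exact hmean x.1 x.1.isLt x.2.1 x.2.2.1 x.2.2.2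
  have hgsq : ∀ x : TTIdx M r N, ∫ ω, g x ω ^ 2 ∂P = σ2 x.1 + μm x.1 ^ 2 := fun x => by
    have hv := hvar x.1 x.1.isLt x.2.1 x.2.2.1 x.2.2.2
    rw [variance_eq_sub (hfamL2 x)] at hv
    have h1 : ∫ ω, g x ω ^ 2 ∂P = ∫ ω, fam x ω ^ 2 ∂P :=
      integral_congr_ae ((hae x).symm.mono fun ω hh => by simp only []; rw [hh])
    have h2 : ∫ ω, fam x ω ∂P = μm x.1 := hmean x.1 x.1.isLt x.2.1 x.2.2.1 x.2.2.2
    simp only [Pi.pow_apply] at hv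
    rw [h1]
    rw [h2] at hv
    linarith
  -- index maps
  set Fc : ((ℓ : Fin (M + 1)) → Fin (r ℓ)) → ((q : Fin M) → Fin (N q)) → Fin M → TTIdx M r N :=
    fun k v q => ⟨q, k q.castSucc, v q, k q.succ⟩ with hFc
  have hFc_inj : ∀ k v, Function.Injective (Fc k v) :=
    fun k v q q' h => congrArg Sigma.fst h
  set A : ((ℓ : Fin (M + 1)) → Fin (r ℓ)) → Ω → ℝ := fun k ω => ∏ q, g (Fc k i q) ω with hA
  set B : ((ℓ : Fin (M + 1)) → Fin (r ℓ)) → Ω → ℝ := fun k ω => ∏ q, g (Fc k j q) ω with hB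
  set S1 : ((ℓ : Fin (M + 1)) → Fin (r ℓ)) → Finset (TTIdx M r N) :=
    fun k => image (Fc k i) univ with hS1
  set S2 : ((ℓ : Fin (M + 1)) → Fin (r ℓ)) → Finset (TTIdx M r N) :=
    fun k => image (Fc k j) univ with hS2
  have hAe : ∀ k, A k = fun ω => ∏ x ∈ S1 k, g x ω := fun k => funext fun ω => by
    show (∏ q, g (Fc k i q) ω) = ∏ x ∈ image (Fc k i) univ, g x ω
    rw [Finset.prod_image (fun q _ q' _ h => hFc_inj k i h)]
  have hBe : ∀ k, B k = fun ω => ∏ x ∈ S2 k, g x ω := fun k => funext fun ω => by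
    show (∏ q, g (Fc k j q) ω) = ∏ x ∈ image (Fc k j) univ, g x ω
    rw [Finset.prod_image (fun q _ q' _ h => hFc_inj k j h)]
  have hAint : ∀ k, Integrable (A k) P := fun k => by
    rw [hAe]; exact (indep_prod_integral hgmeas hgint hgind _).1
  have hBint : ∀ k, Integrable (B k) P := fun k => by
    rw [hBe]; exact (indep_prod_integral hgmeas hgint hgind _).1
  set Pm : ℝ := ∏ q ∈ univ.erase p, μm (q : ℕ) with hPm
  have hSprod : ∀ (k) (v : (q : Fin M) → Fin (N q)),
      ∏ x ∈ image (Fc k v) univ, μm (x.1 : ℕ) = μm (p : ℕ) * Pm := by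
    intro k v
    rw [Finset.prod_image (fun q _ q' _ h => hFc_inj k v h)]
    have : ∀ q : Fin M, μm (((Fc k v q).1 : Fin M) : ℕ) = μm (q : ℕ) := fun q => rfl
    rw [hPm, ← Finset.mul_prod_erase univ (fun q : Fin M => μm (q : ℕ)) (mem_univ p)]
  have hAval : ∀ k, ∫ ω, A k ω ∂P = μm (p : ℕ) * Pm := fun k => by
    rw [hAe, (indep_prod_integral hgmeas hgint hgind _).2]
    rw [Finset.prod_congr rfl fun x _ => hgmean x]
    exact hSprod k i
  have hBval : ∀ k, ∫ ω, B k ω ∂P = μm (p : ℕ) * Pm := fun k => by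
    rw [hBe, (indep_prod_integral hgmeas hgint hgind _).2]
    rw [Finset.prod_congr rfl fun x _ => hgmean x]
    exact hSprod k j
  -- per-pair covariance term
  have key : ∀ k k', Integrable (fun ω => A k ω * B k' ω) P ∧
      (∫ ω, A k ω * B k' ω ∂P) - (∫ ω, A k ω ∂P) * (∫ ω, B k' ω ∂P)
        = if k p.castSucc = k' p.castSucc ∧ k p.succ = k' p.succ
          then σ2 (p : ℕ) * Pm ^ 2 else 0 := by
    intro k k'
    by_cases hm : k p.castSucc = k' p.castSucc ∧ k p.succ = k' p.succ
    · -- matched case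
      have hxp : Fc k' j p = Fc k i p := by
        show (⟨p, k' p.castSucc, j p, k' p.succ⟩ : TTIdx M r N)
            = ⟨p, k p.castSucc, i p, k p.succ⟩
        rw [hm.1, hm.2, hshare]
      have hxpS1 : Fc k i p ∈ S1 k := Finset.mem_image_of_mem _ (mem_univ p)
      have hxpS2 : Fc k i p ∈ S2 k' := Finset.mem_image.mpr ⟨p, mem_univ p, hxp⟩
      have hinter : S1 k ∩ S2 k' = {Fc k i p} := by
        apply Finset.Subset.antisymm
        · intro x hx
          rcases Finset.mem_inter.mp hx with ⟨hx1, hx2⟩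
          obtain ⟨q, -, rfl⟩ := Finset.mem_image.mp hx1
          obtain ⟨q', -, hq⟩ := Finset.mem_image.mp hx2
          have hq1 : q' = q := congrArg Sigma.fst hq
          subst hq1
          by_cases hqp : q' = p
          · subst hqp; exact Finset.mem_singleton_self _
          · exact absurd (TTIdx_mk_inj hq).2.1.symm (hdiff q' hqp)
        · rw [Finset.singleton_subset_iff]
          exact Finset.mem_inter.mpr ⟨hxpS1, hxpS2⟩
      set xp := Fc k i p with hxpdef
      set h : TTIdx M r N → Ω → ℝ :=
        fun x => (fun t => if x = xp then t ^ 2 else t) ∘ g x with hhdef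
      have hhval : ∀ x ω, h x ω = if x = xp then g x ω ^ 2 else g x ω := fun x ω => rfl
      have hhmeas : ∀ x, Measurable (h x) := fun x => by
        rw [hhdef]
        by_cases hx : x = xp
        · simp only [hx, if_pos rfl]
          exact ((hgmeas xp).pow_const 2).comp measurable_id |>.mono le_rfl le_rfl
        · simp only [if_neg hx]
          exact hgmeas x
      have hhint : ∀ x, Integrable (h x) P := fun x => by
        by_cases hx : x = xp
        · refine (hgsqint x).congr ?_
          filter_upwards with ω
          rw [hhval, if_pos hx]
        · refine (hgint x).congr ?_
          filter_upwards with ω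
          rw [hhval, if_neg hx]
      have hhind : iIndepFun h P := by
        refine hgind.comp (fun x t => if x = xp then t ^ 2 else t) (fun x => ?_)
        by_cases hx : x = xp
        · simp only [hx, if_pos rfl]; exact measurable_id.pow_const 2
        · simp only [if_neg hx]; exact measurable_id
      have hABh : (fun ω => A k ω * B k' ω) = fun ω => ∏ x ∈ S1 k ∪ S2 k', h x ω := by
        funext ω
        have herased : ∏ x ∈ (S1 k ∪ S2 k').erase xp, h x ω
            = ∏ x ∈ (S1 k ∪ S2 k').erase xp, g x ω :=
          Finset.prod_congr rfl fun x hx => by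
            rw [hhval, if_neg (Finset.mem_erase.mp hx).1]
        calc A k ω * B k' ω = (∏ x ∈ S1 k, g x ω) * ∏ x ∈ S2 k', g x ω := by
              rw [hAe, hBe]
          _ = (∏ x ∈ S1 k ∪ S2 k', g x ω) * ∏ x ∈ S1 k ∩ S2 k', g x ω :=
              (Finset.prod_union_inter).symm
          _ = (g xp ω * ∏ x ∈ (S1 k ∪ S2 k').erase xp, g x ω) * g xp ω := by
              rw [hinter, Finset.prod_singleton,
                ← Finset.mul_prod_erase (S1 k ∪ S2 k') (fun x => g x ω)
                  (Finset.mem_union_left _ hxpS1)]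
          _ = h xp ω * ∏ x ∈ (S1 k ∪ S2 k').erase xp, h x ω := by
              rw [herased, hhval, if_pos rfl]; ring
          _ = ∏ x ∈ S1 k ∪ S2 k', h x ω :=
              Finset.mul_prod_erase (S1 k ∪ S2 k') (fun x => h x ω)
                (Finset.mem_union_left _ hxpS1)
      have hkey := indep_prod_integral hhmeas hhint hhind (S1 k ∪ S2 k')
      refine ⟨by rw [hABh]; exact hkey.1, ?_⟩
      -- compute the integral of the product
      have hInth : ∀ x, x ≠ xp → ∫ ω, h x ω ∂P = μm (x.1 : ℕ) := fun x hx => by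
        rw [show (fun ω => h x ω) = g x from funext fun ω => by rw [hhval, if_neg hx]]
        exact hgmean x
      have hInthp : ∫ ω, h xp ω ∂P = σ2 (p : ℕ) + μm (p : ℕ) ^ 2 := by
        rw [show (fun ω => h xp ω) = fun ω => g xp ω ^ 2 from
          funext fun ω => by rw [hhval, if_pos rfl]]
        exact hgsq xp
      have herase_union : (S1 k ∪ S2 k').erase xp = (S1 k).erase xp ∪ (S2 k').erase xp :=
        Finset.erase_union_distrib _ _ _
      have hdis2 : Disjoint ((S1 k).erase xp) ((S2 k').erase xp) := by
        rw [Finset.disjoint_left]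
        intro x hx1 hx2
        have hxmem : x ∈ S1 k ∩ S2 k' :=
          Finset.mem_inter.mpr ⟨Finset.mem_of_mem_erase hx1, Finset.mem_of_mem_erase hx2⟩
        rw [hinter, Finset.mem_singleton] at hxmem
        exact (Finset.mem_erase.mp hx1).1 hxmem
      have hpe1 : ∏ x ∈ (S1 k).erase xp, μm (x.1 : ℕ) = Pm := by
        have himg : (S1 k).erase xp = image (Fc k i) (univ.erase p) := by
          rw [show S1 k = image (Fc k i) univ from rfl,
            ← Finset.image_erase (hFc_inj k i) univ p]
        rw [himg, Finset.prod_image (fun q _ q' _ hh => hFc_inj k i hh)]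
      have hpe2 : ∏ x ∈ (S2 k').erase xp, μm (x.1 : ℕ) = Pm := by
        have himg : (S2 k').erase xp = image (Fc k' j) (univ.erase p) := by
          rw [show S2 k' = image (Fc k' j) univ from rfl, show xp = Fc k' j p from hxp.symm,
            ← Finset.image_erase (hFc_inj k' j) univ p]
        rw [himg, Finset.prod_image (fun q _ q' _ hh => hFc_inj k' j hh)]
      have hintval : ∫ ω, A k ω * B k' ω ∂P = (σ2 (p : ℕ) + μm (p : ℕ) ^ 2) * (Pm * Pm) := by
        rw [hABh, hkey.2,
          ← Finset.mul_prod_erase _ _ (Finset.mem_union_left (S2 k') hxpS1), hInthp,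
          herase_union, Finset.prod_union hdis2,
          Finset.prod_congr rfl fun x hx => hInth x (Finset.mem_erase.mp hx).1,
          Finset.prod_congr rfl fun x hx => hInth x (Finset.mem_erase.mp hx).1,
          hpe1, hpe2]
      rw [hintval, hAval, hBval, if_pos hm]
      ring
    · -- disjoint case
      have hdisj : Disjoint (S1 k) (S2 k') := by
        rw [Finset.disjoint_left]
        rintro x hx1 hx2
        obtain ⟨q, -, rfl⟩ := Finset.mem_image.mp hx1
        obtain ⟨q', -, hq⟩ := Finset.mem_image.mp hx2
        have hq1 : q' = q := congrArg Sigma.fst hq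
        subst hq1
        by_cases hqp : q' = p
        · subst hqp
          obtain ⟨h1, h2, h3⟩ := TTIdx_mk_inj hq
          exact hm ⟨h1.symm, h3.symm⟩
        · exact (hdiff q' hqp) (TTIdx_mk_inj hq).2.1.symm
      have hprod : (fun ω => A k ω * B k' ω) = fun ω => ∏ x ∈ S1 k ∪ S2 k', g x ω := by
        funext ω
        rw [hAe, hBe]
        exact (Finset.prod_union hdisj).symm
      have hkey := indep_prod_integral hgmeas hgint hgind (S1 k ∪ S2 k')
      refine ⟨by rw [hprod]; exact hkey.1, ?_⟩
      have e1 : ∏ x ∈ S1 k, ∫ ω, g x ω ∂P = μm (p : ℕ) * Pm :=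
        (Finset.prod_congr rfl fun x _ => hgmean x).trans (hSprod k i)
      have e2 : ∏ x ∈ S2 k', ∫ ω, g x ω ∂P = μm (p : ℕ) * Pm :=
        (Finset.prod_congr rfl fun x _ => hgmean x).trans (hSprod k' j)
      rw [if_neg hm, hprod, hkey.2, Finset.prod_union hdisj, hAval, hBval, e1, e2]
      ring
  -- relate the statement's random variables to the measurable versions
  have hall : ∀ᵐ ω ∂P, ∀ x : TTIdx M r N, fam x ω = g x ω := ae_all_iff.mpr hae
  have haeX : (fun ω => ∑ k : (ℓ : Fin (M + 1)) → Fin (r ℓ),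
      ∏ q : Fin M, θ q (k q.castSucc) (i q) (k q.succ) ω) =ᵐ[P]
      (fun ω => ∑ k : (ℓ : Fin (M + 1)) → Fin (r ℓ), A k ω) := by
    filter_upwards [hall] with ω hω
    exact Finset.sum_congr rfl fun k _ => Finset.prod_congr rfl fun q _ => hω (Fc k i q)
  have haeY : (fun ω => ∑ k : (ℓ : Fin (M + 1)) → Fin (r ℓ),
      ∏ q : Fin M, θ q (k q.castSucc) (j q) (k q.succ) ω) =ᵐ[P]
      (fun ω => ∑ k : (ℓ : Fin (M + 1)) → Fin (r ℓ), B k ω) := by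
    filter_upwards [hall] with ω hω
    exact Finset.sum_congr rfl fun k _ => Finset.prod_congr rfl fun q _ => hω (Fc k j q)
  have haeXY : (fun ω => (∑ k : (ℓ : Fin (M + 1)) → Fin (r ℓ),
        ∏ q : Fin M, θ q (k q.castSucc) (i q) (k q.succ) ω) *
        (∑ k : (ℓ : Fin (M + 1)) → Fin (r ℓ),
        ∏ q : Fin M, θ q (k q.castSucc) (j q) (k q.succ) ω)) =ᵐ[P]
      (fun ω => (∑ k : (ℓ : Fin (M + 1)) → Fin (r ℓ), A k ω) *
        ∑ k : (ℓ : Fin (M + 1)) → Fin (r ℓ), B k ω) := by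
    filter_upwards [haeX, haeY] with ω h1 h2
    rw [h1, h2]
  have hcovred : covRV P
      (fun ω => ∑ k : (ℓ : Fin (M + 1)) → Fin (r ℓ),
          ∏ q : Fin M, θ q (k q.castSucc) (i q) (k q.succ) ω)
      (fun ω => ∑ k : (ℓ : Fin (M + 1)) → Fin (r ℓ),
          ∏ q : Fin M, θ q (k q.castSucc) (j q) (k q.succ) ω)
      = covRV P (fun ω => ∑ k : (ℓ : Fin (M + 1)) → Fin (r ℓ), A k ω)
          (fun ω => ∑ k : (ℓ : Fin (M + 1)) → Fin (r ℓ), B k ω) := by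
    unfold covRV
    rw [integral_congr_ae haeX, integral_congr_ae haeY, integral_congr_ae haeXY]
  rw [hcovred]
  -- expand the covariance bilinearly
  have hexp : covRV P (fun ω => ∑ k : (ℓ : Fin (M + 1)) → Fin (r ℓ), A k ω)
      (fun ω => ∑ k : (ℓ : Fin (M + 1)) → Fin (r ℓ), B k ω)
      = ∑ k : (ℓ : Fin (M + 1)) → Fin (r ℓ), ∑ k' : (ℓ : Fin (M + 1)) → Fin (r ℓ),
          ((∫ ω, A k ω * B k' ω ∂P) - (∫ ω, A k ω ∂P) * (∫ ω, B k' ω ∂P)) := by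
    unfold covRV
    have h1 : (fun ω => (∑ k : (ℓ : Fin (M + 1)) → Fin (r ℓ), A k ω) *
        ∑ k' : (ℓ : Fin (M + 1)) → Fin (r ℓ), B k' ω)
        = fun ω => ∑ k : (ℓ : Fin (M + 1)) → Fin (r ℓ),
            ∑ k' : (ℓ : Fin (M + 1)) → Fin (r ℓ), A k ω * B k' ω := by
      funext ω; rw [Finset.sum_mul_sum]
    rw [h1,
      integral_finset_sum _ fun k _ => integrable_finset_sum _ fun k' _ => (key k k').1,
      Finset.sum_congr rfl fun k _ => integral_finset_sum _ fun k' _ => (key k k').1,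
      integral_finset_sum _ fun k _ => hAint k, integral_finset_sum _ fun k _ => hBint k,
      Finset.sum_mul_sum, ← Finset.sum_sub_distrib]
    exact Finset.sum_congr rfl fun k _ => (Finset.sum_sub_distrib _ _).symm
  rw [hexp,
    Finset.sum_congr rfl fun k _ => Finset.sum_congr rfl fun k' _ => (key k k').2]
  -- counting
  have hite : ∀ k k' : (ℓ : Fin (M + 1)) → Fin (r ℓ),
      (if k p.castSucc = k' p.castSucc ∧ k p.succ = k' p.succ
        then σ2 (p : ℕ) * Pm ^ 2 else 0)
      = σ2 (p : ℕ) * Pm ^ 2 * ∏ ℓ : Fin (M + 1),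
          (if ℓ = p.castSucc ∨ ℓ = p.succ then (if k ℓ = k' ℓ then (1:ℝ) else 0) else 1) := by
    intro k k'
    by_cases hm : k p.castSucc = k' p.castSucc ∧ k p.succ = k' p.succ
    · rw [if_pos hm, Finset.prod_eq_one, mul_one]
      intro ℓ _
      by_cases hsp : ℓ = p.castSucc ∨ ℓ = p.succ
      · rw [if_pos hsp]
        rcases hsp with h1 | h1 <;> subst h1
        · rw [if_pos hm.1]
        · rw [if_pos hm.2]
      · rw [if_neg hsp]
    · rw [if_neg hm]
      rcases not_and_or.mp hm with h1 | h1
      · rw [Finset.prod_eq_zero (mem_univ p.castSucc), mul_zero]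
        rw [if_pos (Or.inl rfl), if_neg h1]
      · rw [Finset.prod_eq_zero (mem_univ p.succ), mul_zero]
        rw [if_pos (Or.inr rfl), if_neg h1]
  rw [Finset.sum_congr rfl fun k _ => Finset.sum_congr rfl fun k' _ => hite k k']
  simp only [← Finset.mul_sum]
  -- inner sum over k'
  have hinner : ∀ k : (ℓ : Fin (M + 1)) → Fin (r ℓ),
      ∑ k' : (ℓ : Fin (M + 1)) → Fin (r ℓ), ∏ ℓ : Fin (M + 1),
          (if ℓ = p.castSucc ∨ ℓ = p.succ then (if k ℓ = k' ℓ then (1:ℝ) else 0) else 1)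
      = ∏ ℓ : Fin (M + 1), (if ℓ = p.castSucc ∨ ℓ = p.succ then (1:ℝ) else (r (ℓ:ℕ) : ℝ)) := by
    intro k
    have h0 : ∑ k' : (ℓ : Fin (M + 1)) → Fin (r ℓ), ∏ ℓ : Fin (M + 1),
          (if ℓ = p.castSucc ∨ ℓ = p.succ then (if k ℓ = k' ℓ then (1:ℝ) else 0) else 1)
        = ∏ ℓ : Fin (M + 1), ∑ b : Fin (r (ℓ:ℕ)),
            (if ℓ = p.castSucc ∨ ℓ = p.succ then (if k ℓ = b then (1:ℝ) else 0) else 1) := by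
      rw [← Fintype.piFinset_univ]
      exact (Finset.prod_univ_sum (fun ℓ : Fin (M + 1) => (univ : Finset (Fin (r (ℓ:ℕ)))))
        (fun ℓ b => if ℓ = p.castSucc ∨ ℓ = p.succ then (if k ℓ = b then (1:ℝ) else 0)
          else 1)).symm
    rw [h0]
    refine Finset.prod_congr rfl fun ℓ _ => ?_
    by_cases hsp : ℓ = p.castSucc ∨ ℓ = p.succ
    · simp [hsp]
    · simp [hsp, Finset.card_univ]
  rw [Finset.sum_congr rfl fun k _ => hinner k, Finset.sum_const,
    Finset.card_univ, nsmul_eq_mul]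
  have hcard : ((Fintype.card ((ℓ : Fin (M + 1)) → Fin (r ℓ)) : ℝ))
      = ∏ ℓ : Fin (M + 1), (r (ℓ:ℕ) : ℝ) := by
    rw [Fintype.card_pi]
    push_cast
    exact Finset.prod_congr rfl fun ℓ _ => by rw [Fintype.card_fin]
  rw [hcard]
  -- assemble the rank product
  have hlink : (∏ ℓ : Fin (M + 1), (r (ℓ:ℕ) : ℝ)) *
      (∏ ℓ : Fin (M + 1), (if ℓ = p.castSucc ∨ ℓ = p.succ then (1:ℝ) else (r (ℓ:ℕ) : ℝ)))
      = ∏ ℓ ∈ Finset.Ico 1 M,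
          (r ℓ : ℝ) ^ (if ℓ = (p : ℕ) ∨ ℓ = (p : ℕ) + 1 then 1 else 2) := by
    rw [← Finset.prod_mul_distrib]
    have hfac : ∀ ℓ : Fin (M + 1),
        (r (ℓ:ℕ) : ℝ) * (if ℓ = p.castSucc ∨ ℓ = p.succ then (1:ℝ) else (r (ℓ:ℕ) : ℝ))
        = (r (ℓ:ℕ) : ℝ) ^ (if (ℓ:ℕ) = (p : ℕ) ∨ (ℓ:ℕ) = (p : ℕ) + 1 then 1 else 2) := by
      intro ℓ
      have hcond : (ℓ = p.castSucc ∨ ℓ = p.succ) ↔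
          ((ℓ:ℕ) = (p : ℕ) ∨ (ℓ:ℕ) = (p : ℕ) + 1) := by
        simp [Fin.ext_iff]
      by_cases hsp : (ℓ:ℕ) = (p : ℕ) ∨ (ℓ:ℕ) = (p : ℕ) + 1
      · rw [if_pos (hcond.mpr hsp), if_pos hsp, pow_one, mul_one]
      · rw [if_neg (fun hh => hsp (hcond.mp hh)), if_neg hsp]; ring
    rw [Finset.prod_congr rfl fun ℓ _ => hfac ℓ]
    rw [Fin.prod_univ_eq_prod_range
      (fun n => (r n : ℝ) ^ (if n = (p : ℕ) ∨ n = (p : ℕ) + 1 then 1 else 2)) (M + 1)]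
    rw [Finset.prod_range_succ, Finset.range_eq_Ico,
      Finset.prod_eq_prod_Ico_succ_bot (by omega : 0 < M)]
    rw [show (r M : ℝ) = 1 by rw [hrM]; norm_num, one_pow, mul_one]
    rw [show (r 0 : ℝ) = 1 by rw [hr0]; norm_num, one_pow, one_mul]
  have hPm2 : Pm ^ 2 = ∏ k ∈ Finset.univ.erase p, μm (k : ℕ) ^ 2 := by
    rw [hPm, ← Finset.prod_pow]
  rw [← mul_assoc, hPm2]
  rw [show σ2 (p : ℕ) * (∏ k ∈ Finset.univ.erase p, μm (k : ℕ) ^ 2) *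
      (∏ ℓ : Fin (M + 1), (r (ℓ:ℕ) : ℝ)) *
      (∏ ℓ : Fin (M + 1), (if ℓ = p.castSucc ∨ ℓ = p.succ then (1:ℝ) else (r (ℓ:ℕ) : ℝ)))
      = ((∏ ℓ : Fin (M + 1), (r (ℓ:ℕ) : ℝ)) *
        (∏ ℓ : Fin (M + 1), (if ℓ = p.castSucc ∨ ℓ = p.succ then (1:ℝ) else (r (ℓ:ℕ) : ℝ)))) *
        σ2 (p : ℕ) * ∏ k ∈ Finset.univ.erase p, μm (k : ℕ) ^ 2 by ring]
  rw [hlink]
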